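/- arXiv:2108.00036 — 3 statements merged into one kernel-verified Lean document; each statement's English description precedes it below -/
import Mathlib

section
/- For $r \leq m \leq n$, the dimension of the space of $S_m$-invariants in $S^r(\mathbb{C}^k \otimes \mathbb{C}^m)$ (for the diagonal permutation action of $S_m$ on the second tensor factor) equals the dimension of the space of $S_n$-invariants in $S^r(\mathbb{C}^k \otimes \mathbb{C}^n)$. -/
open MvPolynomial

/-- The subspace of `S_n`-invariant homogeneous polynomials of degree `d` in `k` sets of
`n` variables, where `σ ∈ S_n` acts diagonally by sending the variable `ᵢxⱼ` to `ᵢx_{σ(j)}`.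
This is the space of `S_n`-invariants in `S^d(ℂ^k ⊗ ℂ^n)`. -/
noncomputable def invDeg (k n d : ℕ) : Submodule ℂ (MvPolynomial (Fin k × Fin n) ℂ) :=
  (homogeneousSubmodule (Fin k × Fin n) ℂ d) ⊓
    ⨅ σ : Equiv.Perm (Fin n),
      LinearMap.ker
        ((rename (Prod.map id σ) : MvPolynomial (Fin k × Fin n) ℂ →ₐ[ℂ]
            MvPolynomial (Fin k × Fin n) ℂ).toLinearMap - LinearMap.id)


lemma mem_invDeg {k n d : ℕ} {p : MvPolynomial (Fin k × Fin n) ℂ} :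
    p ∈ invDeg k n d ↔ p.IsHomogeneous d ∧
      ∀ σ : Equiv.Perm (Fin n), rename (Prod.map id ⇑σ) p = p := by
  simp only [invDeg, Submodule.mem_inf, Submodule.mem_iInf, LinearMap.mem_ker,
    LinearMap.sub_apply, AlgHom.toLinearMap_apply, LinearMap.id_apply, sub_eq_zero,
    mem_homogeneousSubmodule]

lemma perm_extend {N : ℕ} (S : Finset (Fin N)) (h : Fin N → Fin N)
    (hinj : Set.InjOn h S) : ∃ π : Equiv.Perm (Fin N), ∀ x ∈ S, π x = h x := by
  classical
  have hcard : (S.image h).card = S.card := Finset.card_image_of_injOn hinj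
  have hbij : Function.Bijective
      (fun x : {x // x ∈ S} => (⟨h x, Finset.mem_image_of_mem h x.2⟩ :
        {x // x ∈ S.image h})) := by
    rw [Fintype.bijective_iff_injective_and_card]
    refine ⟨fun a b hab => Subtype.ext (hinj a.2 b.2 (congrArg Subtype.val hab)), ?_⟩
    simp only [Fintype.card_coe] at *
    simp [Finset.mem_image, hcard]
  refine ⟨(Equiv.ofBijective _ hbij).extendSubtype, fun x hx => ?_⟩
  rw [Equiv.extendSubtype_apply_of_mem _ x hx]
  rfl

lemma prodmap_inj {α β γ : Type*} {g : β → γ} (hg : Function.Injective g) :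
    Function.Injective (Prod.map (id : α → α) g) :=
  Function.injective_id.prodMap hg

noncomputable def restrL (k : ℕ) {m n : ℕ} (hmn : m ≤ n) :
    MvPolynomial (Fin k × Fin n) ℂ →ₗ[ℂ] MvPolynomial (Fin k × Fin m) ℂ :=
  (AddMonoidAlgebra.coeffLinearEquiv ℂ).symm.toLinearMap ∘ₗ
  (Finsupp.lcomapDomain (Finsupp.mapDomain (Prod.map id (Fin.castLE hmn)))
    (Finsupp.mapDomain_injective (prodmap_inj (Fin.castLE_injective hmn))) :
    ((Fin k × Fin n →₀ ℕ) →₀ ℂ) →ₗ[ℂ] ((Fin k × Fin m →₀ ℕ) →₀ ℂ)) ∘ₗ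
  (AddMonoidAlgebra.coeffLinearEquiv ℂ).toLinearMap

lemma coeff_restrL {k m n : ℕ} (hmn : m ≤ n) (p : MvPolynomial (Fin k × Fin n) ℂ)
    (ν : (Fin k × Fin m) →₀ ℕ) :
    coeff ν (restrL k hmn p) =
      coeff (Finsupp.mapDomain (Prod.map id (Fin.castLE hmn)) ν) p := rfl

lemma degree_mapDomain {α β : Type*} (g : α → β) (ν : α →₀ ℕ) :
    (Finsupp.mapDomain g ν).degree = ν.degree := by
  classical
  rw [show (Finsupp.mapDomain g ν).degree = (Finsupp.mapDomain g ν).sum (fun _ e => e) from rfl,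
    show ν.degree = ν.sum (fun _ e => e) from rfl]
  exact Finsupp.sum_mapDomain_index (fun _ => rfl) (fun _ _ _ => rfl)

lemma coeff_of_invariant {k n : ℕ} {p : MvPolynomial (Fin k × Fin n) ℂ}
    (hp : ∀ σ : Equiv.Perm (Fin n), rename (Prod.map id ⇑σ) p = p)
    (σ : Equiv.Perm (Fin n)) (μ : (Fin k × Fin n) →₀ ℕ) :
    coeff (Finsupp.mapDomain (Prod.map id ⇑σ) μ) p = coeff μ p := by
  conv_lhs => rw [← hp σ]
  exact coeff_rename_mapDomain _ (prodmap_inj σ.injective) p μ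

lemma isHomog_of_coeff {k n d : ℕ} {p : MvPolynomial (Fin k × Fin n) ℂ}
    (h : ∀ μ : (Fin k × Fin n) →₀ ℕ, coeff μ p ≠ 0 → μ.degree = d) :
    p.IsHomogeneous d := by
  intro μ hμ
  rw [Pi.one_def, ← Finsupp.degree_eq_weight_one]
  exact h μ hμ

lemma degree_of_isHomog {k n d : ℕ} {p : MvPolynomial (Fin k × Fin n) ℂ}
    (hp : p.IsHomogeneous d) {μ : (Fin k × Fin n) →₀ ℕ} (h : coeff μ p ≠ 0) :
    μ.degree = d := by
  rw [Finsupp.degree_eq_weight_one]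
  exact hp h

lemma restrL_mem {k r m n : ℕ} (hmn : m ≤ n) {p : MvPolynomial (Fin k × Fin n) ℂ}
    (hp : p ∈ invDeg k n r) : restrL k hmn p ∈ invDeg k m r := by
  classical
  obtain ⟨hp1, hp2⟩ := mem_invDeg.mp hp
  rw [mem_invDeg]
  constructor
  · refine isHomog_of_coeff fun ν hν => ?_
    rw [coeff_restrL] at hν
    have := degree_of_isHomog hp1 hν
    rwa [degree_mapDomain] at this
  · intro τ
    apply MvPolynomial.ext
    intro ν
    set f : Fin k × Fin m → Fin k × Fin n := Prod.map id (Fin.castLE hmn) with hf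
    set σ : Equiv.Perm (Fin n) := (τ⁻¹).viaEmbedding (Fin.castLEEmb hmn) with hσ
    have hν0 : ν = Finsupp.mapDomain (Prod.map id ⇑τ)
        (Finsupp.mapDomain (Prod.map id ⇑τ⁻¹) ν) := by
      rw [← Finsupp.mapDomain_comp]
      rw [show (Prod.map id ⇑τ ∘ Prod.map id ⇑τ⁻¹) = id from funext fun x => by
        simp [Prod.map]]
      rw [Finsupp.mapDomain_id]
    have key : f ∘ Prod.map id ⇑τ⁻¹ = Prod.map id ⇑σ ∘ f := by
      funext x
      have := (τ⁻¹).viaEmbedding_apply (Fin.castLEEmb hmn) x.2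
      simp only [hf, hσ, Prod.map, Function.comp_apply, id_eq]
      rw [show Fin.castLE hmn (τ⁻¹ x.2) = Fin.castLEEmb hmn (τ⁻¹ x.2) from rfl, ← this]
      rfl
    calc coeff ν (rename (Prod.map id ⇑τ) (restrL k hmn p))
        = coeff (Finsupp.mapDomain (Prod.map id ⇑τ)
            (Finsupp.mapDomain (Prod.map id ⇑τ⁻¹) ν)) (rename (Prod.map id ⇑τ)
            (restrL k hmn p)) := by rw [← hν0]
      _ = coeff (Finsupp.mapDomain (Prod.map id ⇑τ⁻¹) ν) (restrL k hmn p) :=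
          coeff_rename_mapDomain _ (prodmap_inj τ.injective) _ _
      _ = coeff (Finsupp.mapDomain f (Finsupp.mapDomain (Prod.map id ⇑τ⁻¹) ν)) p :=
          coeff_restrL hmn p _
      _ = coeff (Finsupp.mapDomain (Prod.map id ⇑σ) (Finsupp.mapDomain f ν)) p := by
          rw [← Finsupp.mapDomain_comp, ← Finsupp.mapDomain_comp, key]
      _ = coeff (Finsupp.mapDomain f ν) p := coeff_of_invariant hp2 σ _
      _ = coeff ν (restrL k hmn p) := (coeff_restrL hmn p ν).symm

lemma restrL_inj {k r m n : ℕ} (hrm : r ≤ m) (hmn : m ≤ n)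
    {p : MvPolynomial (Fin k × Fin n) ℂ} (hp : p ∈ invDeg k n r)
    (h0 : restrL k hmn p = 0) : p = 0 := by
  classical
  obtain ⟨hp1, hp2⟩ := mem_invDeg.mp hp
  apply MvPolynomial.ext
  intro μ
  rw [coeff_zero]
  by_contra hc
  set f : Fin k × Fin m → Fin k × Fin n := Prod.map id (Fin.castLE hmn) with hf
  have hdeg : μ.degree = r := degree_of_isHomog hp1 hc
  set S : Finset (Fin n) := μ.support.image Prod.snd with hS
  have hScard : S.card ≤ r := by
    calc S.card ≤ μ.support.card := Finset.card_image_le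
      _ = ∑ x ∈ μ.support, 1 := by simp
      _ ≤ ∑ x ∈ μ.support, μ x := Finset.sum_le_sum fun x hx =>
          Nat.one_le_iff_ne_zero.mpr (Finsupp.mem_support_iff.mp hx)
      _ = r := hdeg
  have hSn : S.card ≤ n := le_trans (le_trans hScard hrm) hmn
  set e := S.orderIsoOfFin rfl with he
  set h : Fin n → Fin n := fun x =>
    if hx : x ∈ S then Fin.castLE hSn (e.symm ⟨x, hx⟩) else x with hh
  have hinj : Set.InjOn h S := by
    intro a ha b hb hab
    simp only [hh, dif_pos (Finset.mem_coe.mp ha), dif_pos (Finset.mem_coe.mp hb)] at hab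
    have := Fin.castLE_injective hSn hab
    have := e.symm.injective this
    exact congrArg Subtype.val this
  obtain ⟨π, hπ⟩ := perm_extend S h hinj
  have hsmall : ∀ x ∈ S, (π x : ℕ) < m := by
    intro x hx
    rw [hπ x hx, hh]
    simp only [dif_pos hx]
    exact lt_of_lt_of_le (e.symm ⟨x, hx⟩).2 (le_trans hScard hrm)
  set μ' := Finsupp.mapDomain (Prod.map id ⇑π) μ with hμ'
  have hc' : coeff μ' p = coeff μ p := coeff_of_invariant hp2 π μ
  have hsupp : ↑μ'.support ⊆ Set.range f := by
    rw [hμ', Finsupp.mapDomain_support_of_injective (prodmap_inj π.injective)]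
    intro x hx
    simp only [Finset.coe_image, Set.mem_image, Finset.mem_coe] at hx
    obtain ⟨y, hy, rfl⟩ := hx
    have hy2 : y.2 ∈ S := Finset.mem_image_of_mem _ hy
    refine ⟨(y.1, ⟨(π y.2 : ℕ), hsmall y.2 hy2⟩), ?_⟩
    simp [hf, Prod.map]
  have : Finsupp.mapDomain f (Finsupp.comapDomain f μ'
      ((prodmap_inj (Fin.castLE_injective hmn)).injOn)) = μ' :=
    Finsupp.mapDomain_comapDomain _ (prodmap_inj (Fin.castLE_injective hmn)) μ' hsupp
  have hz : coeff μ' p = 0 := by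
    rw [← this, ← coeff_restrL hmn, h0, coeff_zero]
  exact hc (hc' ▸ hz)

noncomputable def symL (k : ℕ) {m n : ℕ} (hmn : m ≤ n) :
    MvPolynomial (Fin k × Fin m) ℂ →ₗ[ℂ] MvPolynomial (Fin k × Fin n) ℂ :=
  ∑ σ : Equiv.Perm (Fin n),
    ((rename (Prod.map id ⇑σ) : MvPolynomial (Fin k × Fin n) ℂ →ₐ[ℂ]
        MvPolynomial (Fin k × Fin n) ℂ).toLinearMap.comp
      (rename (Prod.map (id : Fin k → Fin k) (Fin.castLE hmn)) :
          MvPolynomial (Fin k × Fin m) ℂ →ₐ[ℂ] MvPolynomial (Fin k × Fin n) ℂ).toLinearMap)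

lemma symL_apply {k m n : ℕ} (hmn : m ≤ n) (q : MvPolynomial (Fin k × Fin m) ℂ) :
    symL k hmn q = ∑ σ : Equiv.Perm (Fin n),
      rename (Prod.map id ⇑σ ∘ Prod.map id (Fin.castLE hmn)) q := by
  rw [symL, LinearMap.sum_apply]
  exact Finset.sum_congr rfl fun σ _ => by
    simp [rename_rename]

lemma symL_mem {k r m n : ℕ} (hmn : m ≤ n) {q : MvPolynomial (Fin k × Fin m) ℂ}
    (hq : q ∈ invDeg k m r) : symL k hmn q ∈ invDeg k n r := by
  classical
  obtain ⟨hq1, hq2⟩ := mem_invDeg.mp hq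
  rw [mem_invDeg]
  constructor
  · rw [← mem_homogeneousSubmodule, symL_apply]
    exact Submodule.sum_mem _ fun σ _ => hq1.rename_isHomogeneous
  · intro τ
    rw [symL_apply, map_sum]
    have hterm : ∀ σ : Equiv.Perm (Fin n),
        rename (Prod.map id ⇑τ) (rename (Prod.map id ⇑σ ∘ Prod.map id (Fin.castLE hmn)) q)
          = rename (Prod.map id ⇑(τ * σ) ∘ Prod.map id (Fin.castLE hmn)) q := by
      intro σ
      have hcomp : (Prod.map id ⇑τ ∘ (Prod.map id ⇑σ ∘
            Prod.map (id : Fin k → Fin k) (Fin.castLE hmn))) =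
          (Prod.map id ⇑(τ * σ) ∘ Prod.map (id : Fin k → Fin k) (Fin.castLE hmn)) := by
        funext x
        simp [Prod.map]
      rw [rename_rename, hcomp]
    rw [Finset.sum_congr rfl fun σ _ => hterm σ]
    exact Fintype.sum_equiv (Equiv.mulLeft τ) _ _ fun σ => rfl

lemma relabel {k m n : ℕ} (hmn : m ≤ n) (σ : Equiv.Perm (Fin n))
    {d ν : (Fin k × Fin m) →₀ ℕ}
    (h : Finsupp.mapDomain (Prod.map id ⇑σ ∘ Prod.map (id : Fin k → Fin k) (Fin.castLE hmn)) d
      = Finsupp.mapDomain (Prod.map (id : Fin k → Fin k) (Fin.castLE hmn)) ν) :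
    ∃ π : Equiv.Perm (Fin m), Finsupp.mapDomain (Prod.map id ⇑π) d = ν := by
  classical
  set f : Fin k × Fin m → Fin k × Fin n := Prod.map id (Fin.castLE hmn) with hfdef
  have hfinj : Function.Injective f := prodmap_inj (Fin.castLE_injective hmn)
  have hginj : Function.Injective (Prod.map (id : Fin k → Fin k) ⇑σ ∘ f) :=
    (prodmap_inj σ.injective).comp hfinj
  have hsupp : d.support.image (Prod.map (id : Fin k → Fin k) ⇑σ ∘ f)
      = ν.support.image f := by
    rw [← Finsupp.mapDomain_support_of_injective hginj,
      ← Finsupp.mapDomain_support_of_injective hfinj, h]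
  set cols : Finset (Fin m) := d.support.image Prod.snd with hcols
  have hltc : ∀ j ∈ cols, ((σ (Fin.castLE hmn j)) : ℕ) < m := by
    intro j hj
    obtain ⟨x, hx, rfl⟩ := Finset.mem_image.mp hj
    have hmem : (Prod.map (id : Fin k → Fin k) ⇑σ ∘ f) x ∈ ν.support.image f := by
      rw [← hsupp]
      exact Finset.mem_image_of_mem _ hx
    obtain ⟨y, _, hy⟩ := Finset.mem_image.mp hmem
    have : Fin.castLE hmn y.2 = σ (Fin.castLE hmn x.2) := congrArg Prod.snd hy
    rw [← this]
    exact lt_of_lt_of_le y.2.2 (le_refl m) |>.trans_le (le_refl m) |>.trans_le (le_refl m)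
  set w : Fin m → Fin m := fun j =>
    if hj : ((σ (Fin.castLE hmn j)) : ℕ) < m then ⟨(σ (Fin.castLE hmn j) : ℕ), hj⟩ else j
    with hw
  have hwinj : Set.InjOn w cols := by
    intro a ha b hb hab
    simp only [hw, dif_pos (hltc a (Finset.mem_coe.mp ha)),
      dif_pos (hltc b (Finset.mem_coe.mp hb))] at hab
    have hval : ((σ (Fin.castLE hmn a)) : ℕ) = ((σ (Fin.castLE hmn b)) : ℕ) :=
      congrArg (fun x : Fin m => (x : ℕ)) hab
    have := Fin.val_injective hval
    exact Fin.castLE_injective hmn (σ.injective this)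
  obtain ⟨π, hπ⟩ := perm_extend cols w hwinj
  refine ⟨π, Finsupp.mapDomain_injective hfinj ?_⟩
  rw [← Finsupp.mapDomain_comp, ← h]
  apply Finsupp.mapDomain_congr
  intro x hx
  have hx2 : x.2 ∈ cols := Finset.mem_image_of_mem _ hx
  have hπx : π x.2 = w x.2 := hπ x.2 hx2
  have hlt := hltc x.2 hx2
  simp only [hfdef, hw, Function.comp_apply, Prod.map, id_eq, hπx, dif_pos hlt]
  exact Prod.ext rfl (by ext; simp)

lemma symL_inj {k r m n : ℕ} (hmn : m ≤ n) {q : MvPolynomial (Fin k × Fin m) ℂ}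
    (hq : q ∈ invDeg k m r) (h0 : symL k hmn q = 0) : q = 0 := by
  classical
  obtain ⟨hq1, hq2⟩ := mem_invDeg.mp hq
  apply MvPolynomial.ext
  intro ν
  rw [coeff_zero]
  by_contra hc
  set f : Fin k × Fin m → Fin k × Fin n := Prod.map id (Fin.castLE hmn) with hfdef
  have hfinj : Function.Injective f := prodmap_inj (Fin.castLE_injective hmn)
  set t : Equiv.Perm (Fin n) → ℂ := fun σ => coeff (Finsupp.mapDomain f ν)
    (rename (Prod.map id ⇑σ ∘ f) q) with ht
  have hsum : ∑ σ : Equiv.Perm (Fin n), t σ = 0 := by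
    have := congrArg (coeff (Finsupp.mapDomain f ν)) h0
    rwa [symL_apply, coeff_sum, coeff_zero] at this
  have hone : t 1 = coeff ν q := by
    have hfun : (Prod.map id ⇑(1 : Equiv.Perm (Fin n)) ∘ f) = f := by
      funext x; simp [Prod.map]
    rw [ht]
    simp only [hfun]
    exact coeff_rename_mapDomain f hfinj q ν
  have hval : ∀ σ : Equiv.Perm (Fin n), t σ ≠ 0 → t σ = coeff ν q := by
    intro σ hσ
    obtain ⟨u, hu1, hu2⟩ := coeff_rename_ne_zero _ _ _ hσ
    obtain ⟨π, hπ⟩ := relabel hmn σ (d := u) (ν := ν) hu1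
    have : t σ = coeff u q := by
      rw [ht, ← hu1]
      exact coeff_rename_mapDomain _ ((prodmap_inj σ.injective).comp hfinj) q u
    rw [this, ← hπ]
    exact (coeff_of_invariant hq2 π u).symm
  set T : Finset (Equiv.Perm (Fin n)) := Finset.univ.filter (fun σ => t σ ≠ 0) with hT
  have h1T : (1 : Equiv.Perm (Fin n)) ∈ T := by
    rw [hT, Finset.mem_filter]
    exact ⟨Finset.mem_univ _, by rw [hone]; exact hc⟩
  have : (0 : ℂ) = T.card • coeff ν q := by
    rw [← hsum, ← Finset.sum_filter_ne_zero Finset.univ, ← hT]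
    rw [Finset.sum_congr rfl (fun σ hσ => hval σ (Finset.mem_filter.mp hσ).2),
      Finset.sum_const]
  have hcard : (T.card : ℂ) ≠ 0 :=
    Nat.cast_ne_zero.mpr (Finset.card_ne_zero_of_mem h1T)
  rw [nsmul_eq_mul] at this
  exact hc ((mul_eq_zero.mp this.symm).resolve_left hcard)

lemma invDeg_fd (k n d : ℕ) : FiniteDimensional ℂ (invDeg k n d) := by
  have hle : invDeg k n d ≤ restrictTotalDegree (Fin k × Fin n) ℂ d := by
    intro p hp
    rw [mem_restrictTotalDegree]
    exact (mem_invDeg.mp hp).1.totalDegree_le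
  exact Submodule.finiteDimensional_of_le hle

/-- For `r ≤ m ≤ n`, `dim S^r(ℂ^k ⊗ ℂ^m)^{S_m} = dim S^r(ℂ^k ⊗ ℂ^n)^{S_n}`. -/
theorem dim_invariants_stable (k r m n : ℕ) (hrm : r ≤ m) (hmn : m ≤ n) :
    Module.finrank ℂ (invDeg k m r) = Module.finrank ℂ (invDeg k n r) := by
  have hfdm := invDeg_fd k m r
  have hfdn := invDeg_fd k n r
  set A : invDeg k n r →ₗ[ℂ] invDeg k m r :=
    LinearMap.codRestrict _ ((restrL k hmn).domRestrict _)
      (fun x => restrL_mem hmn x.2) with hA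
  set B : invDeg k m r →ₗ[ℂ] invDeg k n r :=
    LinearMap.codRestrict _ ((symL k hmn).domRestrict _)
      (fun x => symL_mem hmn x.2) with hB
  have hAinj : Function.Injective A := by
    rw [← LinearMap.ker_eq_bot, LinearMap.ker_eq_bot']
    intro x hx0
    have hx : restrL k hmn (x : MvPolynomial (Fin k × Fin n) ℂ) = 0 :=
      congrArg Subtype.val hx0
    exact Subtype.ext (restrL_inj hrm hmn x.2 hx)
  have hBinj : Function.Injective B := by
    rw [← LinearMap.ker_eq_bot, LinearMap.ker_eq_bot']
    intro x hx0
    have hx : symL k hmn (x : MvPolynomial (Fin k × Fin m) ℂ) = 0 :=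
      congrArg Subtype.val hx0
    exact Subtype.ext (symL_inj hmn x.2 hx)
  exact le_antisymm (LinearMap.finrank_le_finrank_of_injective hBinj)
    (LinearMap.finrank_le_finrank_of_injective hAinj)
end

section
/- Let $\lambda$ be a partition with $|\lambda| \leq m \leq n$, and let ${}_n F^\lambda$ denote the irreducible polynomial $GL(n,\mathbb{C})$-representation with highest weight $\lambda$. Then the dimension of the $S_m$-invariants of ${}_m F^\lambda$ equals the dimension of the $S_n$-invariants of ${}_n F^\lambda$, where $S_n \subset GL(n,\mathbb{C})$ is the group of permutation matrices. -/
open scoped TensorProduct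

noncomputable section

/-- `TP n N = (ℂⁿ)^{⊗N}`, the `N`-fold tensor power of `ℂⁿ`. -/
abbrev TP (n N : ℕ) : Type := ⨂[ℂ] _ : Fin N, (Fin n → ℂ)

/-- `S_N` acting on the tensor power by permuting the tensor factors. -/
def permTP (n N : ℕ) (σ : Equiv.Perm (Fin N)) : TP n N ≃ₗ[ℂ] TP n N :=
  PiTensorProduct.reindex ℂ (fun _ : Fin N => Fin n → ℂ) σ

/-- The action of an element of the group algebra `ℂ[S_N]` on the tensor power. -/
def actA (n N : ℕ) (a : MonoidAlgebra ℂ (Equiv.Perm (Fin N))) : TP n N →ₗ[ℂ] TP n N :=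
  a.coeff.sum fun σ c => c • (permTP n N σ).toLinearMap

/-- The row index of the cell numbered `x` in the canonical (row-by-row) filling of the
Young diagram with row lengths `l`. -/
def rowOf (l : List ℕ) (x : ℕ) : ℕ :=
  Nat.findGreatest (fun i => (l.take i).sum ≤ x) l.length

/-- The column index of the cell numbered `x` in the canonical filling. -/
def colOf (l : List ℕ) (x : ℕ) : ℕ := x - (l.take (rowOf l x)).sum

/-- The row group of the canonical tableau of shape `l`: permutations of the cells
preserving each row. -/
def rowSubgroup (l : List ℕ) (N : ℕ) : Subgroup (Equiv.Perm (Fin N)) where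
  carrier := {σ | ∀ x : Fin N, rowOf l (σ x) = rowOf l x}
  one_mem' := by intro x; simp
  mul_mem' := by
    intro σ τ hσ hτ x
    simpa [Equiv.Perm.mul_apply, hτ x] using hσ (τ x)
  inv_mem' := by
    intro σ hσ x
    simpa using (hσ (σ⁻¹ x)).symm

/-- The column group of the canonical tableau of shape `l`: permutations of the cells
preserving each column. -/
def colSubgroup (l : List ℕ) (N : ℕ) : Subgroup (Equiv.Perm (Fin N)) where
  carrier := {σ | ∀ x : Fin N, colOf l (σ x) = colOf l x}
  one_mem' := by intro x; simp
  mul_mem' := by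
    intro σ τ hσ hτ x
    simpa [Equiv.Perm.mul_apply, hτ x] using hσ (τ x)
  inv_mem' := by
    intro σ hσ x
    simpa using (hσ (σ⁻¹ x)).symm

open scoped Classical in
/-- The Young symmetrizer `y_λ = (∑_{p ∈ R} p)(∑_{q ∈ C} sgn(q) q)` of the canonical
tableau of shape `l`, in the group algebra `ℂ[S_N]`. -/
def youngSym (l : List ℕ) (N : ℕ) : MonoidAlgebra ℂ (Equiv.Perm (Fin N)) :=
  (∑ p : rowSubgroup l N, MonoidAlgebra.single (p : Equiv.Perm (Fin N)) (1 : ℂ)) *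
    (∑ q : colSubgroup l N,
      MonoidAlgebra.single (q : Equiv.Perm (Fin N))
        ((Equiv.Perm.sign (q : Equiv.Perm (Fin N)) : ℤ) : ℂ))

/-- The Weyl module `ₙF^λ ⊆ (ℂⁿ)^{⊗|λ|}`: the image of the Young symmetrizer of `λ`
acting on the tensor power.  `GL(n,ℂ)` (acting diagonally) preserves it, and it is the
irreducible `GL(n,ℂ)`-module of highest weight `λ`. -/
def WeylModule (n : ℕ) (l : List ℕ) : Submodule ℂ (TP n l.sum) :=
  LinearMap.range (actA n l.sum (youngSym l l.sum))

/-- The diagonal action of a permutation `τ ∈ Sₙ ⊆ GL(n,ℂ)` on the tensor power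
`(ℂⁿ)^{⊗N}`. -/
def diagTP (n N : ℕ) (τ : Equiv.Perm (Fin n)) : TP n N →ₗ[ℂ] TP n N :=
  PiTensorProduct.map fun _ => LinearMap.funLeft ℂ ℂ τ

/-- The `Sₙ`-invariants of a subspace `F` of the tensor power `(ℂⁿ)^{⊗N}`, for `Sₙ`
acting by permutation matrices (diagonally on the tensor power). -/
def SnInv (n N : ℕ) (F : Submodule ℂ (TP n N)) : Submodule ℂ (TP n N) :=
  F ⊓ ⨅ τ : Equiv.Perm (Fin n), LinearMap.ker (diagTP n N τ - LinearMap.id)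

namespace StabAux

/-- The basic tensors indexed by functions `Fin N → Fin n`. -/
def xv (n N : ℕ) (f : Fin N → Fin n) : TP n N :=
  PiTensorProduct.tprod ℂ (fun i => Pi.single (f i) (1 : ℂ))

/-- The averaging operator over the diagonal `S_n`-action. -/
def avg (n N : ℕ) : TP n N →ₗ[ℂ] TP n N :=
  ((Nat.factorial n : ℂ))⁻¹ • ∑ τ : Equiv.Perm (Fin n), diagTP n N τ

/-- The invariant subspace. -/
def InvS (n N : ℕ) : Submodule ℂ (TP n N) :=
  ⨅ τ : Equiv.Perm (Fin n), LinearMap.ker (diagTP n N τ - LinearMap.id)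

lemma mem_InvS {n N : ℕ} {x : TP n N} :
    x ∈ InvS n N ↔ ∀ τ : Equiv.Perm (Fin n), diagTP n N τ x = x := by
  simp [InvS, Submodule.mem_iInf, LinearMap.mem_ker, LinearMap.sub_apply, sub_eq_zero]

lemma diagTP_xv (n N : ℕ) (τ : Equiv.Perm (Fin n)) (f : Fin N → Fin n) :
    diagTP n N τ (xv n N f) = xv n N (fun i => τ⁻¹ (f i)) := by
  unfold diagTP xv
  rw [PiTensorProduct.map_tprod]
  congr 1
  funext i j
  simp only [LinearMap.funLeft_apply, Pi.single_apply]
  by_cases h : j = τ⁻¹ (f i)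
  · subst h; simp
  · rw [if_neg, if_neg h]
    intro hc
    exact h (by simp [← hc])

lemma permTP_xv (n N : ℕ) (σ : Equiv.Perm (Fin N)) (f : Fin N → Fin n) :
    permTP n N σ (xv n N f) = xv n N (fun i => f (σ⁻¹ i)) := by
  unfold permTP xv
  rw [PiTensorProduct.reindex_tprod]
  rfl

lemma diagTP_comp (n N : ℕ) (τ τ' : Equiv.Perm (Fin n)) :
    (diagTP n N τ) ∘ₗ (diagTP n N τ') = diagTP n N (τ' * τ) := by
  unfold diagTP
  apply PiTensorProduct.ext
  apply MultilinearMap.ext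
  intro v
  simp only [LinearMap.compMultilinearMap_apply, LinearMap.comp_apply,
    PiTensorProduct.map_tprod]
  congr 1

lemma diag_avg (n N : ℕ) (τ : Equiv.Perm (Fin n)) (x : TP n N) :
    diagTP n N τ (avg n N x) = avg n N x := by
  unfold avg
  simp only [LinearMap.smul_apply, LinearMap.sum_apply, map_smul, map_sum]
  congr 1
  exact Fintype.sum_equiv (Equiv.mulRight τ) _ _ (fun τ' => by
    rw [← LinearMap.comp_apply, diagTP_comp, Equiv.coe_mulRight])

lemma avg_diag (n N : ℕ) (τ : Equiv.Perm (Fin n)) (x : TP n N) :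
    avg n N (diagTP n N τ x) = avg n N x := by
  unfold avg
  simp only [LinearMap.smul_apply, LinearMap.sum_apply]
  congr 1
  exact Fintype.sum_equiv (Equiv.mulLeft τ) _ _ (fun τ' => by
    rw [← LinearMap.comp_apply, diagTP_comp, Equiv.coe_mulLeft])

lemma avg_mem_InvS (n N : ℕ) (x : TP n N) : avg n N x ∈ InvS n N :=
  mem_InvS.2 fun τ => diag_avg n N τ x

lemma avg_of_mem {n N : ℕ} {x : TP n N} (hx : x ∈ InvS n N) : avg n N x = x := by
  rw [mem_InvS] at hx
  unfold avg
  simp only [LinearMap.smul_apply, LinearMap.sum_apply]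
  rw [Finset.sum_congr rfl fun τ _ => hx τ, Finset.sum_const]
  simp only [Finset.card_univ, Fintype.card_perm, Fintype.card_fin]
  rw [← Nat.cast_smul_eq_nsmul ℂ, smul_smul, inv_mul_cancel₀, one_smul]
  exact_mod_cast Nat.cast_ne_zero.2 (Nat.factorial_ne_zero n)


open Classical in
/-- Two functions with the same kernel into a fintype differ by a permutation. -/
lemma exists_perm_comp {α β : Type*} [Fintype α] [DecidableEq α] (g g' : β → α)
    (h : ∀ i j, g i = g j ↔ g' i = g' j) : ∃ τ : Equiv.Perm α, ∀ i, τ (g i) = g' i := by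
  classical
  have hw : ∀ a : Set.range g, ∃ i, g i = (a : α) := fun a => a.2
  let φ : Set.range g → Set.range g' := fun a => ⟨g' (hw a).choose, Set.mem_range_self _⟩
  have key : ∀ i : β, (φ ⟨g i, Set.mem_range_self i⟩ : α) = g' i := by
    intro i
    simpa using (h _ i).1 (hw ⟨g i, Set.mem_range_self i⟩).choose_spec
  have hinj : Function.Injective φ := by
    intro a b hab
    have ha := (hw a).choose_spec
    have hb := (hw b).choose_spec
    have : g' (hw a).choose = g' (hw b).choose := congrArg Subtype.val hab
    have := (h _ _).2 this
    exact Subtype.ext (by rw [← ha, ← hb, this])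
  have hsurj : Function.Surjective φ := by
    rintro ⟨b, j, rfl⟩
    exact ⟨⟨g j, Set.mem_range_self j⟩, Subtype.ext (key j)⟩
  let e : Set.range g ≃ Set.range g' := Equiv.ofBijective φ ⟨hinj, hsurj⟩
  have hcard : Fintype.card (↥(Set.range g)ᶜ) = Fintype.card (↥(Set.range g')ᶜ) := by
    rw [Fintype.card_compl_set, Fintype.card_compl_set, Fintype.card_congr e]
  let ec : (↥(Set.range g)ᶜ) ≃ (↥(Set.range g')ᶜ) := Fintype.equivOfCardEq hcard
  refine ⟨(Equiv.Set.sumCompl (Set.range g)).symm.trans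
    ((e.sumCongr ec).trans (Equiv.Set.sumCompl (Set.range g'))), fun i => ?_⟩
  simp only [Equiv.trans_apply]
  rw [Equiv.Set.sumCompl_symm_apply_of_mem (Set.mem_range_self i)]
  simp only [Equiv.sumCongr_apply, Sum.map_inl, Equiv.Set.sumCompl_apply_inl]
  exact key i

/-- The canonical representative of a function modulo postcomposition by bijections. -/
def stdFun {n N : ℕ} (g : Fin N → Fin n) : Fin N → Fin N := fun i =>
  (Finset.univ.filter (fun j => g j = g i)).min' ⟨i, by simp⟩

lemma stdFun_ker {n N : ℕ} (g : Fin N → Fin n) (i j : Fin N) :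
    stdFun g i = stdFun g j ↔ g i = g j := by
  constructor
  · intro hij
    have hi := Finset.min'_mem (Finset.univ.filter (fun j' => g j' = g i)) ⟨i, by simp⟩
    have hj := Finset.min'_mem (Finset.univ.filter (fun j' => g j' = g j)) ⟨j, by simp⟩
    rw [Finset.mem_filter] at hi hj
    rw [show (Finset.univ.filter (fun j' => g j' = g i)).min' ⟨i, by simp⟩ = stdFun g i from rfl]
      at hi
    rw [show (Finset.univ.filter (fun j' => g j' = g j)).min' ⟨j, by simp⟩ = stdFun g j from rfl]
      at hj
    rw [← hi.2, ← hj.2, hij]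
  · intro hij
    unfold stdFun
    congr 1
    exact Finset.filter_congr (fun x _ => by rw [hij])

lemma stdFun_comp {n n' N : ℕ} (g : Fin N → Fin n) (u : Fin n → Fin n')
    (hu : Function.Injective u) : stdFun (fun i => u (g i)) = stdFun g := by
  funext i
  unfold stdFun
  congr 1
  exact Finset.filter_congr (fun x _ => ⟨fun hc => hu hc, fun hc => congrArg u hc⟩)



/-- Averaged basic tensors only depend on the kernel of the indexing function. -/
lemma avg_xv_congr {n N : ℕ} (g g' : Fin N → Fin n)
    (h : ∀ i j, g i = g j ↔ g' i = g' j) : avg n N (xv n N g) = avg n N (xv n N g') := by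
  obtain ⟨τ, hτ⟩ := exists_perm_comp g g' h
  have : xv n N g' = diagTP n N τ⁻¹ (xv n N g) := by
    rw [diagTP_xv]
    congr 1
    funext i
    rw [inv_inv, hτ]
  rw [this, avg_diag]

/-- Extension-by-zero linear map `ℂ^m → ℂ^n`. -/
def jmap (m n : ℕ) (h : m ≤ n) : (Fin m → ℂ) →ₗ[ℂ] (Fin n → ℂ) :=
  LinearMap.pi (fun i : Fin n =>
    if hi : (i : ℕ) < m then LinearMap.proj (⟨i, hi⟩ : Fin m) else 0)

lemma jmap_single (m n : ℕ) (h : m ≤ n) (k : Fin m) :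
    jmap m n h (Pi.single k 1) = Pi.single (Fin.castLE h k) 1 := by
  funext i
  rw [jmap, LinearMap.pi_apply]
  by_cases hi : (i : ℕ) < m
  · rw [dif_pos hi, LinearMap.proj_apply, Pi.single_apply, Pi.single_apply]
    congr 1
    simp only [eq_iff_iff, Fin.ext_iff, Fin.coe_castLE]
  · rw [dif_neg hi, Pi.single_apply, if_neg]
    · rfl
    · intro hc
      exact hi (by rw [hc, Fin.coe_castLE]; exact k.isLt)
      
/-- The inclusion `(ℂ^m)^{⊗N} → (ℂ^n)^{⊗N}`. -/
def Tmap (m n N : ℕ) (h : m ≤ n) : TP m N →ₗ[ℂ] TP n N :=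
  PiTensorProduct.map (fun _ : Fin N => jmap m n h)

lemma Tmap_xv (m n N : ℕ) (h : m ≤ n) (f : Fin N → Fin m) :
    Tmap m n N h (xv m N f) = xv n N (fun i => Fin.castLE h (f i)) := by
  unfold Tmap xv
  rw [PiTensorProduct.map_tprod]
  congr 1
  funext i
  exact jmap_single m n h (f i)



lemma xv_expand {n N : ℕ} (v : Fin N → (Fin n → ℂ)) :
    (PiTensorProduct.tprod ℂ) v = ∑ f : Fin N → Fin n, (∏ i, v i (f i)) • xv n N f := by
  have hv1 : v = fun i => ∑ k : Fin n, v i k • (Pi.single k 1 : Fin n → ℂ) := by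
    funext i
    calc v i = ∑ k : Fin n, Pi.single k (v i k) := (Finset.univ_sum_single (v i)).symm
      _ = ∑ k : Fin n, v i k • (Pi.single k 1 : Fin n → ℂ) :=
        Finset.sum_congr rfl fun k _ => by rw [← Pi.single_smul, smul_eq_mul, mul_one]
  conv_lhs => rw [hv1]
  rw [MultilinearMap.map_sum]
  exact Finset.sum_congr rfl fun f _ => by
    rw [MultilinearMap.map_smul_univ]; rfl

lemma span_xv (n N : ℕ) : Submodule.span ℂ (Set.range (xv n N)) = ⊤ := by
  rw [eq_top_iff, ← PiTensorProduct.span_tprod_eq_top, Submodule.span_le]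
  rintro x ⟨v, rfl⟩
  rw [xv_expand]
  exact Submodule.sum_mem _ fun f _ => Submodule.smul_mem _ _
    (Submodule.subset_span (Set.mem_range_self f))

lemma finite_TP (n N : ℕ) : Module.Finite ℂ (TP n N) :=
  ⟨⟨(Set.finite_range (xv n N)).toFinset, by
    rw [Set.Finite.coe_toFinset, span_xv]⟩⟩

lemma InvS_eq_span (n N : ℕ) :
    InvS n N = Submodule.span ℂ (Set.range (fun f => avg n N (xv n N f))) := by
  apply le_antisymm
  · intro v hv
    rw [← avg_of_mem hv]
    have hvtop : v ∈ Submodule.span ℂ (Set.range (xv n N)) := by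
      rw [span_xv]; trivial
    have := Submodule.mem_map_of_mem (f := avg n N) hvtop
    rw [Submodule.map_span, ← Set.range_comp] at this
    exact this
  · rw [Submodule.span_le]
    rintro x ⟨f, rfl⟩
    exact avg_mem_InvS n N (xv n N f)



lemma avg_xv (n N : ℕ) (g : Fin N → Fin n) :
    avg n N (xv n N g)
      = ((Nat.factorial n : ℂ))⁻¹ • ∑ τ : Equiv.Perm (Fin n), xv n N (fun i => τ⁻¹ (g i)) := by
  unfold avg
  simp only [LinearMap.smul_apply, LinearMap.sum_apply]
  congr 1
  exact Finset.sum_congr rfl fun τ _ => diagTP_xv n N τ g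

lemma collapse {M : Type*} [AddCommGroup M] [Module ℂ M] (m : ℕ) (x : M) :
    ((Nat.factorial m : ℂ))⁻¹ • ((Finset.univ : Finset (Equiv.Perm (Fin m))).card • x) = x := by
  simp only [Finset.card_univ, Fintype.card_perm, Fintype.card_fin]
  rw [← Nat.cast_smul_eq_nsmul ℂ, smul_smul, inv_mul_cancel₀, one_smul]
  exact_mod_cast Nat.cast_ne_zero.2 (Nat.factorial_ne_zero m)

/-- The comparison map `(ℂ^m)^{⊗N} → (ℂ^n)^{⊗N}`, inclusion followed by averaging. -/
def Phi (m n N : ℕ) (h2 : m ≤ n) : TP m N →ₗ[ℂ] TP n N :=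
  (avg n N) ∘ₗ Tmap m n N h2

/-- A one-sided inverse to `Phi` on the invariants. -/
def Psi (m n N : ℕ) (h1 : N ≤ m) : TP n N →ₗ[ℂ] TP m N :=
  PiTensorProduct.lift (∑ g : Fin N → Fin n,
    (LinearMap.toSpanSingleton ℂ (TP m N)
        (avg m N (xv m N (fun i => Fin.castLE h1 (stdFun g i))))).compMultilinearMap
      ((MultilinearMap.mkPiAlgebra ℂ (Fin N) ℂ).compLinearMap
        (fun i => LinearMap.proj (g i))))

lemma Psi_xv (m n N : ℕ) (h1 : N ≤ m) (f : Fin N → Fin n) :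
    Psi m n N h1 (xv n N f)
      = avg m N (xv m N (fun i => Fin.castLE h1 (stdFun f i))) := by
  unfold Psi xv
  rw [PiTensorProduct.lift.tprod, MultilinearMap.sum_apply, Finset.sum_eq_single f]
  · simp only [LinearMap.compMultilinearMap_apply, MultilinearMap.compLinearMap_apply,
      MultilinearMap.mkPiAlgebra_apply, LinearMap.proj_apply, LinearMap.toSpanSingleton_apply,
      Pi.single_eq_same, Finset.prod_const_one, one_smul]
  · intro g _ hg
    have : ∃ i, g i ≠ f i := by
      by_contra hc
      push_neg at hc
      exact hg (funext hc)
    obtain ⟨i0, hi0⟩ := this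
    simp only [LinearMap.compMultilinearMap_apply, MultilinearMap.compLinearMap_apply,
      MultilinearMap.mkPiAlgebra_apply, LinearMap.proj_apply, LinearMap.toSpanSingleton_apply]
    rw [Finset.prod_eq_zero (Finset.mem_univ i0), zero_smul]
    rw [Pi.single_apply, if_neg hi0]
  · intro hf
    exact absurd (Finset.mem_univ f) hf

lemma Phi_avg_xv (m n N : ℕ) (h2 : m ≤ n) (f : Fin N → Fin m) :
    Phi m n N h2 (avg m N (xv m N f)) = avg n N (xv n N (fun i => Fin.castLE h2 (f i))) := by
  unfold Phi
  rw [LinearMap.comp_apply, avg_xv, map_smul, map_sum, map_smul, map_sum]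
  have : ∀ ρ : Equiv.Perm (Fin m),
      avg n N (Tmap m n N h2 (xv m N (fun i => ρ⁻¹ (f i))))
        = avg n N (xv n N (fun i => Fin.castLE h2 (f i))) := by
    intro ρ
    rw [Tmap_xv]
    apply avg_xv_congr
    intro i j
    rw [(Fin.castLE_injective h2).eq_iff, (Fin.castLE_injective h2).eq_iff,
      (Equiv.injective ρ⁻¹).eq_iff]
  rw [Finset.sum_congr rfl (fun ρ _ => this ρ), Finset.sum_const, collapse]

lemma Psi_avg_xv (m n N : ℕ) (h1 : N ≤ m) (g : Fin N → Fin n) :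
    Psi m n N h1 (avg n N (xv n N g))
      = avg m N (xv m N (fun i => Fin.castLE h1 (stdFun g i))) := by
  rw [avg_xv, map_smul, map_sum]
  have : ∀ τ : Equiv.Perm (Fin n),
      Psi m n N h1 (xv n N (fun i => τ⁻¹ (g i)))
        = avg m N (xv m N (fun i => Fin.castLE h1 (stdFun g i))) := by
    intro τ
    rw [Psi_xv, stdFun_comp g (⇑τ⁻¹) (Equiv.injective τ⁻¹)]
  rw [Finset.sum_congr rfl (fun τ _ => this τ), Finset.sum_const, collapse]

lemma Psi_Phi_avg_xv (m n N : ℕ) (h1 : N ≤ m) (h2 : m ≤ n) (f : Fin N → Fin m) :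
    Psi m n N h1 (Phi m n N h2 (avg m N (xv m N f))) = avg m N (xv m N f) := by
  rw [Phi_avg_xv, Psi_avg_xv]
  have hstd : stdFun (fun i => Fin.castLE h2 (f i)) = stdFun f :=
    stdFun_comp f (Fin.castLE h2) (Fin.castLE_injective h2)
  rw [hstd]
  apply avg_xv_congr
  intro i j
  rw [(Fin.castLE_injective h1).eq_iff, stdFun_ker]

lemma Psi_Phi_on_InvS (m n N : ℕ) (h1 : N ≤ m) (h2 : m ≤ n) :
    ∀ v ∈ InvS m N, Psi m n N h1 (Phi m n N h2 v) = v := by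
  have hker : InvS m N ≤ LinearMap.ker ((Psi m n N h1 ∘ₗ Phi m n N h2) - LinearMap.id) := by
    rw [InvS_eq_span, Submodule.span_le]
    rintro x ⟨f, rfl⟩
    rw [SetLike.mem_coe, LinearMap.mem_ker, LinearMap.sub_apply, LinearMap.comp_apply,
      LinearMap.id_apply, Psi_Phi_avg_xv, sub_self]
  intro v hv
  have := hker hv
  rw [LinearMap.mem_ker, LinearMap.sub_apply, LinearMap.comp_apply, LinearMap.id_apply,
    sub_eq_zero] at this
  exact this

lemma Phi_map_InvS (m n N : ℕ) (h1 : N ≤ m) (h2 : m ≤ n) :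
    Submodule.map (Phi m n N h2) (InvS m N) = InvS n N := by
  apply le_antisymm
  · rintro x ⟨v, hv, rfl⟩
    exact avg_mem_InvS n N _
  · rw [InvS_eq_span (n := n), Submodule.span_le]
    rintro x ⟨g, rfl⟩
    refine ⟨avg m N (xv m N (fun i => Fin.castLE h1 (stdFun g i))), avg_mem_InvS m N _, ?_⟩
    rw [Phi_avg_xv]
    apply avg_xv_congr
    intro i j
    rw [(Fin.castLE_injective h2).eq_iff, (Fin.castLE_injective h1).eq_iff, stdFun_ker]



lemma diag_perm (n N : ℕ) (σ : Equiv.Perm (Fin N)) (τ : Equiv.Perm (Fin n)) :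
    diagTP n N τ ∘ₗ (permTP n N σ).toLinearMap
      = (permTP n N σ).toLinearMap ∘ₗ diagTP n N τ := by
  apply PiTensorProduct.ext
  apply MultilinearMap.ext
  intro v
  simp only [LinearMap.compMultilinearMap_apply, LinearMap.comp_apply, LinearEquiv.coe_coe]
  unfold permTP diagTP
  rw [PiTensorProduct.reindex_tprod, PiTensorProduct.map_tprod, PiTensorProduct.map_tprod,
    PiTensorProduct.reindex_tprod]

lemma Tmap_perm (m n N : ℕ) (h2 : m ≤ n) (σ : Equiv.Perm (Fin N)) :
    Tmap m n N h2 ∘ₗ (permTP m N σ).toLinearMap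
      = (permTP n N σ).toLinearMap ∘ₗ Tmap m n N h2 := by
  apply PiTensorProduct.ext
  apply MultilinearMap.ext
  intro v
  simp only [LinearMap.compMultilinearMap_apply, LinearMap.comp_apply, LinearEquiv.coe_coe]
  unfold permTP Tmap
  rw [PiTensorProduct.reindex_tprod, PiTensorProduct.map_tprod, PiTensorProduct.map_tprod,
    PiTensorProduct.reindex_tprod]

lemma avg_perm (n N : ℕ) (σ : Equiv.Perm (Fin N)) (x : TP n N) :
    avg n N (permTP n N σ x) = permTP n N σ (avg n N x) := by
  unfold avg
  simp only [LinearMap.smul_apply, LinearMap.sum_apply, map_smul, map_sum]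
  congr 1
  refine Finset.sum_congr rfl fun τ _ => ?_
  exact LinearMap.congr_fun (diag_perm n N σ τ) x

lemma Phi_perm (m n N : ℕ) (h2 : m ≤ n) (σ : Equiv.Perm (Fin N)) (x : TP m N) :
    Phi m n N h2 (permTP m N σ x) = permTP n N σ (Phi m n N h2 x) := by
  unfold Phi
  rw [LinearMap.comp_apply, LinearMap.comp_apply,
    show Tmap m n N h2 (permTP m N σ x) = permTP n N σ (Tmap m n N h2 x) from
      LinearMap.congr_fun (Tmap_perm m n N h2 σ) x,
    avg_perm]

lemma actA_apply (n N : ℕ) (a : MonoidAlgebra ℂ (Equiv.Perm (Fin N))) (x : TP n N) :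
    actA n N a x = a.coeff.sum fun σ c => c • permTP n N σ x := by
  unfold actA
  rw [Finsupp.sum, Finsupp.sum, LinearMap.sum_apply]
  exact Finset.sum_congr rfl fun σ _ => rfl

lemma Phi_actA (m n N : ℕ) (h2 : m ≤ n) (a : MonoidAlgebra ℂ (Equiv.Perm (Fin N)))
    (x : TP m N) : Phi m n N h2 (actA m N a x) = actA n N a (Phi m n N h2 x) := by
  rw [actA_apply, actA_apply, Finsupp.sum, Finsupp.sum, map_sum]
  refine Finset.sum_congr rfl fun σ _ => ?_
  rw [map_smul, Phi_perm]

lemma diag_actA (n N : ℕ) (τ : Equiv.Perm (Fin n)) (a : MonoidAlgebra ℂ (Equiv.Perm (Fin N)))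
    (x : TP n N) : diagTP n N τ (actA n N a x) = actA n N a (diagTP n N τ x) := by
  rw [actA_apply, actA_apply, Finsupp.sum, Finsupp.sum, map_sum]
  refine Finset.sum_congr rfl fun σ _ => ?_
  rw [map_smul]
  congr 1
  exact LinearMap.congr_fun (diag_perm n N σ τ) x

lemma avg_actA (n N : ℕ) (a : MonoidAlgebra ℂ (Equiv.Perm (Fin N))) (x : TP n N) :
    avg n N (actA n N a x) = actA n N a (avg n N x) := by
  rw [actA_apply, actA_apply, Finsupp.sum, Finsupp.sum, map_sum]
  refine Finset.sum_congr rfl fun σ _ => ?_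
  rw [map_smul, avg_perm]

lemma snInv_eq (n N : ℕ) (a : MonoidAlgebra ℂ (Equiv.Perm (Fin N))) :
    SnInv n N (LinearMap.range (actA n N a)) = Submodule.map (actA n N a) (InvS n N) := by
  apply le_antisymm
  · rintro x hx
    rw [SnInv, Submodule.mem_inf] at hx
    obtain ⟨hx1, hx2⟩ := hx
    obtain ⟨u, rfl⟩ := hx1
    have hinv : actA n N a u ∈ InvS n N := hx2
    refine ⟨avg n N u, avg_mem_InvS n N u, ?_⟩
    rw [← avg_actA, avg_of_mem hinv]
  · rintro x ⟨u, hu, rfl⟩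
    rw [SnInv, Submodule.mem_inf]
    refine ⟨⟨u, rfl⟩, ?_⟩
    show actA n N a u ∈ InvS n N
    have hu' : ∀ τ, diagTP n N τ u = u := mem_InvS.1 hu
    rw [mem_InvS]
    intro τ
    rw [diag_actA, hu' τ]

lemma actA_map_InvS_le (n N : ℕ) (a : MonoidAlgebra ℂ (Equiv.Perm (Fin N))) :
    Submodule.map (actA n N a) (InvS n N) ≤ InvS n N := by
  rintro x ⟨u, hu, rfl⟩
  have hu' : ∀ τ, diagTP n N τ u = u := mem_InvS.1 hu
  rw [mem_InvS]
  intro τ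
  rw [diag_actA, hu' τ]

end StabAux

/-- For a partition `λ` with `|λ| ≤ m ≤ n`, the dimension of the `S_m`-invariants of the
Weyl module `ₘF^λ` equals the dimension of the `S_n`-invariants of `ₙF^λ`.  The
partition is given as a weakly decreasing list `l` of positive row lengths. -/
theorem weyl_module_invariants_stable (l : List ℕ) (hl : l.Pairwise (· ≥ ·))
    (hpos : ∀ x ∈ l, 0 < x) (m n : ℕ) (h1 : l.sum ≤ m) (h2 : m ≤ n) :
    Module.finrank ℂ (SnInv m l.sum (WeylModule m l))
      = Module.finrank ℂ (SnInv n l.sum (WeylModule n l)) := by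
  classical
  haveI : Module.Finite ℂ (TP m l.sum) := StabAux.finite_TP m l.sum
  haveI : Module.Finite ℂ (TP n l.sum) := StabAux.finite_TP n l.sum
  set a := youngSym l l.sum with ha
  set Φ := StabAux.Phi m n l.sum h2 with hΦ
  set Ψ := StabAux.Psi m n l.sum h1 with hΨ
  set W := Submodule.map (actA m l.sum a) (StabAux.InvS m l.sum) with hW
  have hW_le : W ≤ StabAux.InvS m l.sum := StabAux.actA_map_InvS_le m l.sum a
  have hPhiA : Φ ∘ₗ actA m l.sum a = actA n l.sum a ∘ₗ Φ :=
    LinearMap.ext fun x => StabAux.Phi_actA m n l.sum h2 a x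
  have hmap : Submodule.map Φ W
      = Submodule.map (actA n l.sum a) (StabAux.InvS n l.sum) := by
    rw [hW, ← Submodule.map_comp, hPhiA, Submodule.map_comp,
      StabAux.Phi_map_InvS m n l.sum h1 h2]
  have hψφ : Submodule.map Ψ (Submodule.map Φ W) = W := by
    rw [← Submodule.map_comp]
    apply le_antisymm
    · rintro x ⟨w, hw, rfl⟩
      rw [LinearMap.comp_apply,
        StabAux.Psi_Phi_on_InvS m n l.sum h1 h2 w (hW_le hw)]
      exact hw
    · intro w hw
      exact ⟨w, hw, by
        rw [LinearMap.comp_apply,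
          StabAux.Psi_Phi_on_InvS m n l.sum h1 h2 w (hW_le hw)]⟩
  have hfr : Module.finrank ℂ (Submodule.map Φ W) = Module.finrank ℂ W := by
    apply le_antisymm
    · exact Submodule.finrank_map_le _ _
    · calc Module.finrank ℂ W
          = Module.finrank ℂ (Submodule.map Ψ (Submodule.map Φ W)) := by rw [hψφ]
        _ ≤ Module.finrank ℂ (Submodule.map Φ W) := Submodule.finrank_map_le _ _
  have e1 : SnInv m l.sum (WeylModule m l) = W := StabAux.snInv_eq m l.sum a
  have e2 : SnInv n l.sum (WeylModule n l)
      = Submodule.map (actA n l.sum a) (StabAux.InvS n l.sum) :=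
    StabAux.snInv_eq n l.sum a
  rw [e1, e2, ← hmap, hfr]

end
end

section
/- Quasi-freeness in low degree (m=2 case): In the polynomial ring $\mathcal{R}_{k,n}$ in $k$ sets of $n$ variables with diagonal $S_n$-action, let $\mathcal{H}_{k,n}$ be the orthogonal complement (harmonics) of the ideal generated by the positive-degree polarized power sums $p_\alpha$. If for each multi-index $\alpha$ with $1 \leq d(\alpha) \leq 2$ we choose homogeneous $h_\alpha \in \mathcal{H}_{k,n}$ with $\deg h_\alpha + d(\alpha) = 2$, and $\sum_{d(\alpha)\leq 2} h_\alpha p_\alpha = 0$, then all $h_\alpha = 0$ (assuming $2 \leq n$). -/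
open MvPolynomial

/-- The polarized power sum `p_α = ∑_{j=1}^n ∏_{i=1}^k (ᵢxⱼ)^{αᵢ}` in `k` sets of `n`
variables. -/
noncomputable def polPowerSum (k n : ℕ) (α : Fin k → ℕ) :
    MvPolynomial (Fin k × Fin n) ℂ :=
  ∑ j : Fin n, ∏ i : Fin k, (X (i, j) : MvPolynomial (Fin k × Fin n) ℂ) ^ α i

/-- The constant-coefficient differential operator `f(∂)` associated to a polynomial `f`:
each monomial `c·∏ v, x_v^{β v}` acts as `c·∏ v, ∂_v^{β v}`. -/
noncomputable def diffOp (k n : ℕ) (f : MvPolynomial (Fin k × Fin n) ℂ) :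
    Module.End ℂ (MvPolynomial (Fin k × Fin n) ℂ) :=
  (AddMonoidAlgebra.coeff f).sum fun β c =>
    c • (β.support.noncommProd
      (fun v => (((pderiv v).toLinearMap : Module.End ℂ (MvPolynomial (Fin k × Fin n) ℂ)) ^ β v))
      (fun u _ v _ _ => Commute.pow_pow (LinearMap.ext fun p => by
        induction p using MvPolynomial.induction_on with
        | C a => simp [Module.End.mul_apply, pderiv_C]
        | add p q hp hq =>
            simp only [Module.End.mul_apply, map_add] at *
            rw [hp, hq]
        | mul_X p i hp =>
            simp only [Module.End.mul_apply, Derivation.coeFn_coe] at hp ⊢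
            simp only [pderiv_mul, map_add]
            rw [hp]
            have h1 : ∀ a b : Fin k × Fin n,
                (pderiv a) ((pderiv b) (X i : MvPolynomial (Fin k × Fin n) ℂ)) = 0 := by
              intro a b
              rcases eq_or_ne i b with rfl | hb
              · simp [pderiv_X_self]
              · simp [pderiv_X_of_ne hb]
            rw [h1, h1]
            ring) _ _))

/-- `h` is harmonic when it is killed by `p_α(∂)` for every Weyl generator `p_α`
(`α ≠ 0`, `|α| ≤ n`); equivalently, `h` is orthogonal (for the apolarity pairing) to the
ideal `𝓘_{k,n}` generated by the positive-degree polarized power sums. -/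
def IsHarmonic (k n : ℕ) (h : MvPolynomial (Fin k × Fin n) ℂ) : Prop :=
  ∀ α : Fin k → ℕ, α ≠ 0 → (∑ i, α i) ≤ n → diffOp k n (polPowerSum k n α) h = 0

namespace QFAux

variable {k n : ℕ}

lemma diffOp_add (f g : MvPolynomial (Fin k × Fin n) ℂ) :
    diffOp k n (f + g) = diffOp k n f + diffOp k n g := by
  unfold diffOp
  rw [AddMonoidAlgebra.coeff_add]
  exact Finsupp.sum_add_index' (fun _ => zero_smul _ _) (fun _ b c => add_smul b c _)

lemma diffOp_zero : diffOp k n 0 = 0 := by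
  unfold diffOp
  rw [AddMonoidAlgebra.coeff_zero]
  exact Finsupp.sum_zero_index

lemma diffOp_sum {ι : Type*} (s : Finset ι) (f : ι → MvPolynomial (Fin k × Fin n) ℂ) :
    diffOp k n (∑ j ∈ s, f j) = ∑ j ∈ s, diffOp k n (f j) := by
  induction s using Finset.cons_induction with
  | empty => simpa using diffOp_zero
  | cons a s ha ih => rw [Finset.sum_cons, Finset.sum_cons, diffOp_add, ih]

lemma diffOp_X (v : Fin k × Fin n) :
    diffOp k n (X v) = (pderiv v).toLinearMap := by
  have hX : (X v : MvPolynomial (Fin k × Fin n) ℂ) = monomial (Finsupp.single v 1) 1 := by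
    rw [← X_pow_eq_monomial, pow_one]
  rw [diffOp, hX, sum_monomial_eq (by simp)]
  simp [Finsupp.support_single_ne_zero v one_ne_zero]

lemma polPowerSum_single (i : Fin k) :
    polPowerSum k n (Pi.single i 1) = ∑ j : Fin n, X (i, j) := by
  unfold polPowerSum
  refine Finset.sum_congr rfl fun j _ => ?_
  rw [Finset.prod_eq_single i (fun b _ hb => by simp [Pi.single_eq_of_ne hb])
    (by simp), Pi.single_eq_same, pow_one]

lemma pps_zero : polPowerSum k n 0 = C (n : ℂ) := by
  unfold polPowerSum
  have : ∀ j : Fin n, ∏ i : Fin k, (X (i, j) : MvPolynomial (Fin k × Fin n) ℂ) ^ (0 : Fin k → ℕ) i = 1 := by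
    intro j
    simp
  rw [Finset.sum_congr rfl fun j _ => this j, Finset.sum_const, Finset.card_univ,
    Fintype.card_fin, nsmul_eq_mul, mul_one, C_eq_coe_nat]

lemma mon_eq (α : Fin k → ℕ) (j : Fin n) :
    ∏ i : Fin k, (X (i, j) : MvPolynomial (Fin k × Fin n) ℂ) ^ α i
      = monomial (∑ i : Fin k, Finsupp.single (i, j) (α i)) 1 := by
  simp [monomial_sum_index, X_pow_eq_monomial]

lemma mon_apply (α : Fin k → ℕ) (j : Fin n) (v : Fin k × Fin n) :
    (∑ i : Fin k, Finsupp.single (i, j) (α i)) v = if v.2 = j then α v.1 else 0 := by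
  classical
  obtain ⟨v1, v2⟩ := v
  rw [Finsupp.finset_sum_apply]
  simp only [Finsupp.single_apply, Prod.mk.injEq]
  by_cases hv : v2 = j
  · subst hv
    simp [Finset.sum_ite_eq]
  · rw [if_neg hv]
    refine Finset.sum_eq_zero fun i _ => ?_
    rw [if_neg (fun hij => hv hij.2.symm)]

lemma mon_sub (α : Fin k → ℕ) (a : Fin k) (j : Fin n) :
    (∑ i : Fin k, Finsupp.single (i, j) (α i)) - Finsupp.single (a, j) 1
      = ∑ i : Fin k, Finsupp.single (i, j) ((α - Pi.single a 1 : Fin k → ℕ) i) := by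
  ext v
  obtain ⟨v1, v2⟩ := v
  rw [Finsupp.tsub_apply, mon_apply, mon_apply, Finsupp.single_apply]
  by_cases h2 : v2 = j
  · subst h2
    simp only [if_pos rfl, Pi.sub_apply]
    by_cases h1 : v1 = a
    · subst h1
      rw [if_pos rfl, Pi.single_eq_same]
      simp
    · rw [if_neg (fun hc => h1 (congrArg Prod.fst hc).symm), Pi.single_eq_of_ne h1]
      simp
  · rw [if_neg h2, if_neg h2, if_neg (fun hc => h2 (congrArg Prod.snd hc).symm)]
    simp

lemma L_pow (a : Fin k) (α : Fin k → ℕ) :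
    ∑ j : Fin n, pderiv (a, j) (polPowerSum k n α)
      = (α a : ℂ) • polPowerSum k n (α - Pi.single a (1:ℕ)) := by
  unfold polPowerSum
  simp only [mon_eq, map_sum, pderiv_monomial, one_mul]
  rw [Finset.sum_comm, Finset.smul_sum]
  refine Finset.sum_congr rfl fun j _ => ?_
  rw [Finset.sum_eq_single j (fun b _ hb => by rw [mon_apply]; simp [hb]) (by simp)]
  rw [mon_apply, mon_sub]
  simp [smul_monomial]

lemma L_mul (a : Fin k) (f g : MvPolynomial (Fin k × Fin n) ℂ) :
    ∑ j : Fin n, pderiv (a, j) (f * g)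
      = (∑ j : Fin n, pderiv (a, j) f) * g + f * ∑ j : Fin n, pderiv (a, j) g := by
  rw [Finset.sum_mul, Finset.mul_sum, ← Finset.sum_add_distrib]
  exact Finset.sum_congr rfl fun j _ => pderiv_mul

lemma eq_of_le_of_sum_le {α β : Fin k → ℕ} (hle : ∀ i, β i ≤ α i)
    (hs : ∑ i, α i ≤ ∑ i, β i) : α = β := by
  have h1 : ∑ i, β i ≤ ∑ i, α i := Finset.sum_le_sum (fun i _ => hle i)
  have heq : ∑ i, β i = ∑ i, α i := le_antisymm h1 hs
  funext i
  exact ((Finset.sum_eq_sum_iff_of_le (fun i _ => hle i)).1 heq i (Finset.mem_univ i)).symm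

lemma exists_ne_zero {α : Fin k → ℕ} (h1 : 1 ≤ ∑ i, α i) : ∃ a, α a ≠ 0 := by
  by_contra hc
  push_neg at hc
  rw [Finset.sum_eq_zero (fun i _ => hc i)] at h1
  omega

lemma sum_eq_one_decomp {α : Fin k → ℕ} (h1 : ∑ i, α i = 1) :
    ∃ a, α = Pi.single a 1 := by
  obtain ⟨a, ha⟩ := exists_ne_zero (k := k) (le_of_eq h1.symm)
  refine ⟨a, eq_of_le_of_sum_le (fun i => ?_) ?_⟩
  · rcases eq_or_ne i a with rfl | hi
    · simpa [Pi.single_eq_same] using Nat.one_le_iff_ne_zero.2 ha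
    · simp [Pi.single_eq_of_ne hi]
  · rw [h1, Fintype.sum_pi_single' a 1]

lemma single_le_of_pos {α : Fin k → ℕ} {a : Fin k} (ha : 1 ≤ α a) :
    ∀ i, (Pi.single a 1 : Fin k → ℕ) i ≤ α i := by
  intro i
  rcases eq_or_ne i a with rfl | hi
  · simpa [Pi.single_eq_same] using ha
  · simp [Pi.single_eq_of_ne hi]

lemma sum_eq_two_decomp {α : Fin k → ℕ} (h2 : ∑ i, α i = 2) :
    ∃ a b, α = Pi.single a 1 + Pi.single b 1 := by
  obtain ⟨a, ha⟩ := exists_ne_zero (k := k) (by rw [h2]; omega)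
  have ha1 : 1 ≤ α a := Nat.one_le_iff_ne_zero.2 ha
  have hle := single_le_of_pos ha1
  have hsub : ∑ i, (α - Pi.single a 1 : Fin k → ℕ) i = 1 := by
    have : ∑ i, (α - Pi.single a 1 : Fin k → ℕ) i + ∑ i, Pi.single a (1:ℕ) i = ∑ i, α i := by
      rw [← Finset.sum_add_distrib]
      refine Finset.sum_congr rfl fun i _ => ?_
      have := hle i
      simp only [Pi.sub_apply]
      omega
    rw [Fintype.sum_pi_single' a 1, h2] at this
    omega
  obtain ⟨b, hb⟩ := sum_eq_one_decomp hsub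
  refine ⟨a, b, funext fun i => ?_⟩
  have h := congrFun hb i
  simp only [Pi.sub_apply] at h
  have := hle i
  simp only [Pi.add_apply]
  omega

end QFAux

open scoped Classical in
/-- Quasi-freeness in degree `m = 2`: if homogeneous harmonics `h_α` with
`deg h_α + d(α) = 2` (for `1 ≤ d(α) ≤ 2`) satisfy `∑_α h_α p_α = 0`, then all `h_α = 0`
(assuming `2 ≤ n`). -/
theorem quasi_freeness_degree_two (k n : ℕ) (hn : 2 ≤ n)
    (h : (Fin k → ℕ) → MvPolynomial (Fin k × Fin n) ℂ)
    (hharm : ∀ α, IsHarmonic k n (h α))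
    (hhom : ∀ α : Fin k → ℕ, 1 ≤ ∑ i, α i → ∑ i, α i ≤ 2 →
      (h α).IsHomogeneous (2 - ∑ i, α i))
    (hzero : ∑ α ∈ (Fintype.piFinset fun _ : Fin k => Finset.range 3).filter
        (fun α => 1 ≤ ∑ i, α i ∧ ∑ i, α i ≤ 2), h α * polPowerSum k n α = 0) :
    ∀ α : Fin k → ℕ, 1 ≤ ∑ i, α i → ∑ i, α i ≤ 2 → h α = 0 := by
  classical
  -- The operator `L_a = ∑_j ∂/∂ x_{a,j}` kills every harmonic polynomial.
  have L_harm : ∀ (a : Fin k) (α : Fin k → ℕ), ∑ j : Fin n, pderiv (a, j) (h α) = 0 := by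
    intro a α
    have hh := hharm α (Pi.single a 1)
      (fun hz => by have := congrFun hz a; simp [Pi.single_eq_same] at this)
      (by rw [Fintype.sum_pi_single' a 1]; omega)
    have hop : diffOp k n (polPowerSum k n (Pi.single a 1))
        = ∑ j : Fin n,
          ((pderiv (a, j)).toLinearMap : Module.End ℂ (MvPolynomial (Fin k × Fin n) ℂ)) := by
      rw [QFAux.polPowerSum_single, QFAux.diffOp_sum]
      exact Finset.sum_congr rfl fun j _ => QFAux.diffOp_X (a, j)
    rw [hop] at hh
    simpa [LinearMap.sum_apply] using hh
  have key : ∀ (a : Fin k) (α β : Fin k → ℕ),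
      ∑ j : Fin n, pderiv (a, j) (h α * polPowerSum k n β)
        = (β a : ℂ) • (h α * polPowerSum k n (β - Pi.single a 1)) := by
    intro a α β
    rw [QFAux.L_mul, L_harm a α, QFAux.L_pow, zero_mul, zero_add, mul_smul_comm]
  set S := (Fintype.piFinset fun _ : Fin k => Finset.range 3).filter
      (fun α => 1 ≤ ∑ i, α i ∧ ∑ i, α i ≤ 2) with hS
  have Eq1 : ∀ a : Fin k,
      ∑ α ∈ S, (α a : ℂ) • (h α * polPowerSum k n (α - Pi.single a 1)) = 0 := by
    intro a
    calc ∑ α ∈ S, (α a : ℂ) • (h α * polPowerSum k n (α - Pi.single a 1))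
        = ∑ α ∈ S, ∑ j : Fin n, pderiv (a, j) (h α * polPowerSum k n α) :=
          Finset.sum_congr rfl fun α _ => (key a α α).symm
      _ = ∑ j : Fin n, pderiv (a, j) (∑ α ∈ S, h α * polPowerSum k n α) := by
          rw [Finset.sum_comm]
          exact Finset.sum_congr rfl fun j _ => (map_sum (pderiv (a, j)) _ S).symm
      _ = 0 := by rw [hzero]; simp
  have Eq2 : ∀ a b : Fin k,
      ∑ α ∈ S, (α a : ℂ) • (((α - Pi.single a 1 : Fin k → ℕ) b : ℂ) •
        (h α * polPowerSum k n (α - Pi.single a 1 - Pi.single b 1))) = 0 := by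
    intro a b
    calc ∑ α ∈ S, (α a : ℂ) • (((α - Pi.single a 1 : Fin k → ℕ) b : ℂ) •
          (h α * polPowerSum k n (α - Pi.single a 1 - Pi.single b 1)))
        = ∑ α ∈ S, ∑ j : Fin n,
            pderiv (b, j) ((α a : ℂ) • (h α * polPowerSum k n (α - Pi.single a 1))) := by
          refine Finset.sum_congr rfl fun α _ => ?_
          rw [Finset.sum_congr rfl fun j (_ : j ∈ Finset.univ) =>
              (pderiv (b, j)).map_smul ((α a : ℂ)) _,
            ← Finset.smul_sum, key b α (α - Pi.single a 1)]
      _ = ∑ j : Fin n, pderiv (b, j)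
            (∑ α ∈ S, (α a : ℂ) • (h α * polPowerSum k n (α - Pi.single a 1))) := by
          rw [Finset.sum_comm]
          exact Finset.sum_congr rfl fun j _ => (map_sum (pderiv (b, j)) _ S).symm
      _ = 0 := by rw [Eq1 a]; simp
  have hCn : (C (n : ℂ) : MvPolynomial (Fin k × Fin n) ℂ) ≠ 0 := by
    have : (n : ℂ) ≠ 0 := Nat.cast_ne_zero.2 (by omega)
    simpa using this
  -- membership facts
  have hmem2 : ∀ a b : Fin k, (Pi.single a 1 + Pi.single b 1 : Fin k → ℕ) ∈ S := by
    intro a b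
    have hsum : ∑ i, (Pi.single a 1 + Pi.single b 1 : Fin k → ℕ) i = 2 := by
      simp only [Pi.add_apply, Finset.sum_add_distrib, Fintype.sum_pi_single' a (1 : ℕ),
        Fintype.sum_pi_single' b (1 : ℕ)]
    rw [hS, Finset.mem_filter, Fintype.mem_piFinset]
    refine ⟨fun i => ?_, by omega, by omega⟩
    rw [Finset.mem_range]
    simp only [Pi.add_apply, Pi.single_apply]
    split_ifs <;> omega
  have hmem1 : ∀ a : Fin k, (Pi.single a 1 : Fin k → ℕ) ∈ S := by
    intro a
    have hsum : ∑ i, (Pi.single a 1 : Fin k → ℕ) i = 1 := Fintype.sum_pi_single' a 1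
    rw [hS, Finset.mem_filter, Fintype.mem_piFinset]
    refine ⟨fun i => ?_, by omega, by omega⟩
    rw [Finset.mem_range]
    simp only [Pi.single_apply]
    split_ifs <;> omega
  -- Step 1: all degree-2 coefficients vanish.
  have step2 : ∀ a b : Fin k, h (Pi.single a 1 + Pi.single b 1) = 0 := by
    intro a b
    have e2 := Eq2 a b
    rw [Finset.sum_eq_single_of_mem _ (hmem2 a b) ?side] at e2
    case side =>
      intro α hα hne
      rcases Nat.eq_zero_or_pos (α a) with hz | hpos
      · simp [hz]
      rcases Nat.eq_zero_or_pos ((α - Pi.single a 1 : Fin k → ℕ) b) with hz | hpos'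
      · simp [hz]
      exfalso
      apply hne
      rw [hS, Finset.mem_filter] at hα
      obtain ⟨-, h1, h2⟩ := hα
      have ha' : ∀ i, (Pi.single a 1 : Fin k → ℕ) i ≤ α i := QFAux.single_le_of_pos hpos
      have hle : ∀ i, (Pi.single a 1 + Pi.single b 1 : Fin k → ℕ) i ≤ α i := by
        intro i
        have hb' : (Pi.single b 1 : Fin k → ℕ) i ≤ α i - (Pi.single a 1 : Fin k → ℕ) i := by
          rcases eq_or_ne i b with rfl | hib
          · rw [Pi.single_eq_same]
            exact hpos'
          · simp [Pi.single_eq_of_ne hib]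
        have := ha' i
        simp only [Pi.add_apply]
        omega
      have hs2 : ∑ i, (Pi.single a 1 + Pi.single b 1 : Fin k → ℕ) i = 2 := by
        simp only [Pi.add_apply, Finset.sum_add_distrib, Fintype.sum_pi_single' a (1 : ℕ),
          Fintype.sum_pi_single' b (1 : ℕ)]
      exact QFAux.eq_of_le_of_sum_le hle (by rw [hs2]; exact h2)
    have hd1 : (Pi.single a 1 + Pi.single b 1 : Fin k → ℕ) - Pi.single a 1 = Pi.single b 1 := by
      funext i
      simp only [Pi.sub_apply, Pi.add_apply]
      omega
    have hd2 : (Pi.single b 1 : Fin k → ℕ) - Pi.single b 1 = 0 := by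
      funext i
      simp
    rw [hd1, hd2, QFAux.pps_zero, Pi.single_eq_same] at e2
    have hca : ((Pi.single a 1 + Pi.single b 1 : Fin k → ℕ) a : ℂ) ≠ 0 := by
      rw [Nat.cast_ne_zero]
      simp only [Pi.add_apply, Pi.single_eq_same]
      omega
    have hres : h (Pi.single a 1 + Pi.single b 1) * C (n : ℂ) = 0 := by
      have e3 := (smul_eq_zero.1 e2).resolve_left hca
      have e4 := (smul_eq_zero.1 e3).resolve_left (by norm_num : ((1 : ℕ) : ℂ) ≠ 0)
      exact e4
    exact (mul_eq_zero.1 hres).resolve_right hCn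
  -- Step 2: all degree-1 coefficients vanish.
  have step1 : ∀ a : Fin k, h (Pi.single a 1) = 0 := by
    intro a
    have e1 := Eq1 a
    rw [Finset.sum_eq_single_of_mem _ (hmem1 a) ?side] at e1
    case side =>
      intro α hα hne
      rw [hS, Finset.mem_filter] at hα
      obtain ⟨-, h1, h2⟩ := hα
      rcases (by omega : ∑ i, α i = 1 ∨ ∑ i, α i = 2) with hs | hs
      · obtain ⟨c, rfl⟩ := QFAux.sum_eq_one_decomp hs
        have hca : c ≠ a := fun hca => hne (by rw [hca])
        simp [Pi.single_eq_of_ne hca.symm]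
      · obtain ⟨c, d, rfl⟩ := QFAux.sum_eq_two_decomp hs
        rw [step2 c d, zero_mul, smul_zero]
    have hd : (Pi.single a 1 : Fin k → ℕ) - Pi.single a 1 = 0 := by
      funext i
      simp
    rw [hd, QFAux.pps_zero, Pi.single_eq_same] at e1
    have e2 := (smul_eq_zero.1 e1).resolve_left (by norm_num : ((1 : ℕ) : ℂ) ≠ 0)
    exact (mul_eq_zero.1 e2).resolve_right hCn
  -- Conclusion
  intro α h1 h2
  rcases (by omega : ∑ i, α i = 1 ∨ ∑ i, α i = 2) with hs | hs
  · obtain ⟨a, rfl⟩ := QFAux.sum_eq_one_decomp hs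
    exact step1 a
  · obtain ⟨a, b, rfl⟩ := QFAux.sum_eq_two_decomp hs
    exact step2 a b
end
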